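/- Let $q, t$ be nonzero complex numbers with $t \ne 1$, and let $x_1,\dots,x_n, y_1,\dots,y_m, w$ be complex numbers such that the $x_i$ are pairwise distinct, the $y_j$ are pairwise distinct, $x_i \ne y_j$ for all $i,j$, and $1 - t^{-1} x_i w \ne 0$, $1 - t^{-1} y_j w \ne 0$ for all $i, j$. Then $\prod_{i=1}^n \frac{1 - x_i w}{1 - t^{-1} x_i w} \prod_{j=1}^m \frac{1 - t^{-1} q y_j w}{1 - t^{-1} y_j w} - 1 = t^n q^m - 1 + (1-t)\sum_{i=1}^n \frac{A_i}{1 - t^{-1} x_i w} + (1-q)\sum_{j=1}^m \frac{B_j}{1 - t^{-1} y_j w}$, where $A_i = \prod_{k \ne i} \frac{x_i - t x_k}{x_i - x_k} \prod_{j=1}^m \frac{x_i - q y_j}{x_i - y_j}$ and $B_j = \prod_{i=1}^n \frac{y_j - t x_i}{y_j - x_i} \prod_{l \ne j} \frac{y_j - q y_l}{y_j - y_l}$. -/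

import Mathlib

open Finset

/-- basic split of a single factor -/
lemma L1 (q u : ℂ) (h : 1 - u ≠ 0) : (1 - q*u)/(1-u) = q + (1-q)/(1-u) := by
  field_simp
  ring

/-- basic two-pole partial fraction identity -/
lemma L2 (q b c u v : ℂ) (hbc : b - c ≠ 0) (hu : 1-u ≠ 0) (hv : 1-v ≠ 0)
    (hrel : c*u = b*v) :
    (1 - q*u)/(1-u) * (1/(1-v)) = (c - q*b)/(c-b)*(1/(1-v)) + (1-q)*(b/(b-c))*(1/(1-u)) := by
  have hcb : c - b ≠ 0 := fun h => hbc (by linear_combination -h)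
  field_simp
  linear_combination ((1-q)*(b-c)) * hrel

lemma pf_split_q (q t b w : ℂ) (hb : 1 - t⁻¹*b*w ≠ 0) :
    (1 - t⁻¹*q*b*w)/(1 - t⁻¹*b*w) = q + (1-q)/(1 - t⁻¹*b*w) := by
  have := L1 q (t⁻¹*b*w) hb
  rw [show (1:ℂ) - t⁻¹*q*b*w = 1 - q*(t⁻¹*b*w) by ring]
  exact this

lemma pf_split_t (t a w : ℂ) (ht : t ≠ 0) (ha : 1 - t⁻¹*a*w ≠ 0) :
    (1 - a*w)/(1 - t⁻¹*a*w) = t + (1-t)/(1 - t⁻¹*a*w) := by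
  have := L1 t (t⁻¹*a*w) ha
  rw [show (1:ℂ) - a*w = 1 - t*(t⁻¹*a*w) by field_simp]
  exact this

lemma pf2q (q t b c w : ℂ) (hbc : b - c ≠ 0)
    (hb : 1 - t⁻¹*b*w ≠ 0) (hc : 1 - t⁻¹*c*w ≠ 0) :
    (1 - t⁻¹*q*b*w)/(1 - t⁻¹*b*w) * (1/(1 - t⁻¹*c*w))
      = (c - q*b)/(c - b) * (1/(1 - t⁻¹*c*w))
        + (1-q) * (b/(b - c)) * (1/(1 - t⁻¹*b*w)) := by
  have := L2 q b c (t⁻¹*b*w) (t⁻¹*c*w) hbc hb hc (by ring)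
  rw [show (1:ℂ) - t⁻¹*q*b*w = 1 - q*(t⁻¹*b*w) by ring]
  exact this

lemma pf2t (t a c w : ℂ) (ht : t ≠ 0) (hac : a - c ≠ 0)
    (ha : 1 - t⁻¹*a*w ≠ 0) (hc : 1 - t⁻¹*c*w ≠ 0) :
    (1 - a*w)/(1 - t⁻¹*a*w) * (1/(1 - t⁻¹*c*w))
      = (c - t*a)/(c - a) * (1/(1 - t⁻¹*c*w))
        + (1-t) * (a/(a - c)) * (1/(1 - t⁻¹*a*w)) := by
  have := L2 t a c (t⁻¹*a*w) (t⁻¹*c*w) hac ha hc (by ring)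
  rw [show (1:ℂ) - a*w = 1 - t*(t⁻¹*a*w) by field_simp]
  exact this

/-- the pure-y case -/
lemma keyY (q t : ℂ) (ht0 : t ≠ 0) (u : Finset ℂ) :
    ∀ w : ℂ, (∀ b ∈ u, 1 - t⁻¹*b*w ≠ 0) →
    ∏ b ∈ u, (1 - t⁻¹*q*b*w)/(1 - t⁻¹*b*w)
      = q ^ u.card + (1-q) * ∑ b ∈ u,
          (∏ c ∈ u.erase b, (b - q*c)/(b - c)) / (1 - t⁻¹*b*w) := by
  induction u using Finset.induction_on with
  | empty => intro w _; simp
  | @insert b u hb ih =>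
    intro w hw
    have hwb : 1 - t⁻¹*b*w ≠ 0 := hw b (mem_insert_self _ _)
    have hwu : ∀ c ∈ u, 1 - t⁻¹*c*w ≠ 0 := fun c hc => hw c (mem_insert_of_mem hc)
    have hbc : ∀ c ∈ u, b ≠ c := fun c hc h => hb (h ▸ hc)
    -- residue identity
    have resB : ∏ c ∈ u, (b - q*c)/(b - c)
        = q ^ u.card + (1-q) * ∑ c ∈ u,
            (∏ d ∈ u.erase c, (c - q*d)/(c - d)) * (b/(b - c)) := by
      by_cases hb0 : b = 0
      · subst hb0
        have h1 : ∏ c ∈ u, ((0:ℂ) - q*c)/(0 - c) = q ^ u.card := by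
          rw [← prod_const]
          refine prod_congr rfl fun c hc => ?_
          have hc0 : c ≠ 0 := fun h => (hbc c hc) h.symm
          field_simp
          ring
        rw [h1]
        simp
      · have hb0' : b ≠ 0 := hb0
        have hD : ∀ c : ℂ, 1 - t⁻¹*c*(t/b) = (b - c)/b := fun c => by
          field_simp
        have hden : ∀ c ∈ u, 1 - t⁻¹*c*(t/b) ≠ 0 := fun c hc => by
          rw [hD c]
          exact div_ne_zero (sub_ne_zero.mpr (hbc c hc)) hb0'
        have key := ih (t/b) hden
        have e1 : ∏ c ∈ u, (1 - t⁻¹*q*c*(t/b))/(1 - t⁻¹*c*(t/b))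
            = ∏ c ∈ u, (b - q*c)/(b - c) := by
          refine prod_congr rfl fun c hc => ?_
          rw [hD c, show (1:ℂ) - t⁻¹*q*c*(t/b) = (b - q*c)/b by field_simp <;> ring_nf]
          exact div_div_div_cancel_right₀ hb0' _ _
        have e2 : ∑ c ∈ u, (∏ d ∈ u.erase c, (c - q*d)/(c - d)) / (1 - t⁻¹*c*(t/b))
            = ∑ c ∈ u, (∏ d ∈ u.erase c, (c - q*d)/(c - d)) * (b/(b - c)) := by
          refine sum_congr rfl fun c hc => ?_
          rw [hD c, div_div_eq_mul_div, mul_div_assoc]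
        rw [← e1, key, e2]
    -- main computation
    rw [prod_insert hb, ih w hwu, card_insert_of_notMem hb, sum_insert hb, erase_insert hb]
    have e3 : ∑ c ∈ u, (∏ d ∈ (insert b u).erase c, (c - q*d)/(c - d)) / (1 - t⁻¹*c*w)
        = ∑ c ∈ u, ((c - q*b)/(c - b) * ∏ d ∈ u.erase c, (c - q*d)/(c - d)) / (1 - t⁻¹*c*w) := by
      refine sum_congr rfl fun c hc => ?_
      rw [erase_insert_of_ne (hbc c hc), prod_insert (fun h => hb (mem_of_mem_erase h))]
    rw [e3]
    have hfac := pf_split_q q t b w hwb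
    have hsum : (1 - t⁻¹*q*b*w)/(1 - t⁻¹*b*w) * ∑ c ∈ u,
          (∏ d ∈ u.erase c, (c - q*d)/(c - d)) / (1 - t⁻¹*c*w)
        = (∑ c ∈ u, ((c - q*b)/(c - b) * ∏ d ∈ u.erase c, (c - q*d)/(c - d)) / (1 - t⁻¹*c*w))
          + (1-q) * (∑ c ∈ u, (∏ d ∈ u.erase c, (c - q*d)/(c - d)) * (b/(b - c)))
              / (1 - t⁻¹*b*w) := by
      rw [mul_sum, mul_sum, sum_div, ← sum_add_distrib]
      refine sum_congr rfl fun c hc => ?_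
      have h2 : b - c ≠ 0 := sub_ne_zero.mpr (hbc c hc)
      have := pf2q q t b c w h2 hwb (hwu c hc)
      linear_combination (∏ d ∈ u.erase c, (c - q*d)/(c - d)) * this
    linear_combination (q ^ u.card) * hfac + (1-q) * hsum
      - ((1-q)/(1 - t⁻¹*b*w)) * resB

/-- the general case by induction on the x-variables -/
lemma keyXY (q t : ℂ) (ht0 : t ≠ 0) (u : Finset ℂ) :
    ∀ s : Finset ℂ, (∀ a ∈ s, a ∉ u) → ∀ w : ℂ,
      (∀ a ∈ s, 1 - t⁻¹*a*w ≠ 0) → (∀ b ∈ u, 1 - t⁻¹*b*w ≠ 0) →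
    (∏ a ∈ s, (1 - a*w)/(1 - t⁻¹*a*w)) * ∏ b ∈ u, (1 - t⁻¹*q*b*w)/(1 - t⁻¹*b*w)
      = t ^ s.card * q ^ u.card
        + (1-t) * ∑ a ∈ s, ((∏ c ∈ s.erase a, (a - t*c)/(a - c))
            * ∏ b ∈ u, (a - q*b)/(a - b)) / (1 - t⁻¹*a*w)
        + (1-q) * ∑ b ∈ u, ((∏ a ∈ s, (b - t*a)/(b - a))
            * ∏ c ∈ u.erase b, (b - q*c)/(b - c)) / (1 - t⁻¹*b*w) := by
  intro s
  induction s using Finset.induction_on with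
  | empty =>
    intro _ w _ hwu
    simpa using keyY q t ht0 u w hwu
  | @insert a s ha ih =>
    intro hdisj w hws hwu
    have hwa : 1 - t⁻¹*a*w ≠ 0 := hws a (mem_insert_self _ _)
    have hws' : ∀ i ∈ s, 1 - t⁻¹*i*w ≠ 0 := fun i hi => hws i (mem_insert_of_mem hi)
    have hdisj' : ∀ i ∈ s, i ∉ u := fun i hi => hdisj i (mem_insert_of_mem hi)
    have hau : a ∉ u := hdisj a (mem_insert_self _ _)
    have hai : ∀ i ∈ s, a ≠ i := fun i hi h => ha (h ▸ hi)
    have haj : ∀ j ∈ u, a ≠ j := fun j hj h => hau (h ▸ hj)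
    -- residue identity at w = t/a
    have resA : (∏ c ∈ s, (a - t*c)/(a - c)) * ∏ b ∈ u, (a - q*b)/(a - b)
        = t ^ s.card * q ^ u.card
          + (1-t) * ∑ i ∈ s, (((∏ c ∈ s.erase i, (i - t*c)/(i - c))
              * ∏ b ∈ u, (i - q*b)/(i - b)) * (a/(a - i)))
          + (1-q) * ∑ j ∈ u, (((∏ i ∈ s, (j - t*i)/(j - i))
              * ∏ c ∈ u.erase j, (j - q*c)/(j - c)) * (a/(a - j))) := by
      by_cases ha0 : a = 0
      · subst ha0
        have h1 : ∏ c ∈ s, ((0:ℂ) - t*c)/(0 - c) = t ^ s.card := by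
          rw [← prod_const]
          refine prod_congr rfl fun c hc => ?_
          have hc0 : c ≠ 0 := fun h => (hai c hc) h.symm
          field_simp
          ring
        have h2 : ∏ b ∈ u, ((0:ℂ) - q*b)/(0 - b) = q ^ u.card := by
          rw [← prod_const]
          refine prod_congr rfl fun b hbu => ?_
          have hb0 : b ≠ 0 := fun h => (haj b hbu) h.symm
          field_simp
          ring
        rw [h1, h2]
        simp
      · have ha0' : a ≠ 0 := ha0
        have hD : ∀ c : ℂ, 1 - t⁻¹*c*(t/a) = (a - c)/a := fun c => by
          field_simp
        have hden1 : ∀ i ∈ s, 1 - t⁻¹*i*(t/a) ≠ 0 := fun i hi => by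
          rw [hD i]
          exact div_ne_zero (sub_ne_zero.mpr (hai i hi)) ha0'
        have hden2 : ∀ j ∈ u, 1 - t⁻¹*j*(t/a) ≠ 0 := fun j hj => by
          rw [hD j]
          exact div_ne_zero (sub_ne_zero.mpr (haj j hj)) ha0'
        have key := ih hdisj' (t/a) hden1 hden2
        have e1 : ∏ i ∈ s, (1 - i*(t/a))/(1 - t⁻¹*i*(t/a)) = ∏ i ∈ s, (a - t*i)/(a - i) := by
          refine prod_congr rfl fun i hi => ?_
          rw [hD i, show (1:ℂ) - i*(t/a) = (a - t*i)/a by field_simp <;> ring_nf]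
          exact div_div_div_cancel_right₀ ha0' _ _
        have e2 : ∏ j ∈ u, (1 - t⁻¹*q*j*(t/a))/(1 - t⁻¹*j*(t/a))
            = ∏ j ∈ u, (a - q*j)/(a - j) := by
          refine prod_congr rfl fun j hj => ?_
          rw [hD j, show (1:ℂ) - t⁻¹*q*j*(t/a) = (a - q*j)/a by field_simp <;> ring_nf]
          exact div_div_div_cancel_right₀ ha0' _ _
        have e3 : ∑ i ∈ s, ((∏ c ∈ s.erase i, (i - t*c)/(i - c))
              * ∏ b ∈ u, (i - q*b)/(i - b)) / (1 - t⁻¹*i*(t/a))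
            = ∑ i ∈ s, (((∏ c ∈ s.erase i, (i - t*c)/(i - c))
              * ∏ b ∈ u, (i - q*b)/(i - b)) * (a/(a - i))) := by
          refine sum_congr rfl fun i hi => ?_
          rw [hD i, div_div_eq_mul_div, mul_div_assoc]
        have e4 : ∑ j ∈ u, ((∏ i ∈ s, (j - t*i)/(j - i))
              * ∏ c ∈ u.erase j, (j - q*c)/(j - c)) / (1 - t⁻¹*j*(t/a))
            = ∑ j ∈ u, (((∏ i ∈ s, (j - t*i)/(j - i))
              * ∏ c ∈ u.erase j, (j - q*c)/(j - c)) * (a/(a - j))) := by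
          refine sum_congr rfl fun j hj => ?_
          rw [hD j, div_div_eq_mul_div, mul_div_assoc]
        rw [← e1, ← e2, key, e3, e4]
    -- main computation
    rw [prod_insert ha, mul_assoc, ih hdisj' w hws' hwu,
      card_insert_of_notMem ha, sum_insert ha, erase_insert ha]
    have e5 : ∑ i ∈ s, ((∏ c ∈ (insert a s).erase i, (i - t*c)/(i - c))
          * ∏ b ∈ u, (i - q*b)/(i - b)) / (1 - t⁻¹*i*w)
        = ∑ i ∈ s, (((i - t*a)/(i - a)) * ((∏ c ∈ s.erase i, (i - t*c)/(i - c))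
          * ∏ b ∈ u, (i - q*b)/(i - b))) / (1 - t⁻¹*i*w) := by
      refine sum_congr rfl fun i hi => ?_
      rw [erase_insert_of_ne (hai i hi), prod_insert (fun h => ha (mem_of_mem_erase h))]
      ring
    have e6 : ∑ j ∈ u, ((∏ i ∈ insert a s, (j - t*i)/(j - i))
          * ∏ c ∈ u.erase j, (j - q*c)/(j - c)) / (1 - t⁻¹*j*w)
        = ∑ j ∈ u, (((j - t*a)/(j - a)) * ((∏ i ∈ s, (j - t*i)/(j - i))
          * ∏ c ∈ u.erase j, (j - q*c)/(j - c))) / (1 - t⁻¹*j*w) := by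
      refine sum_congr rfl fun j hj => ?_
      rw [prod_insert ha]
      ring
    rw [e5, e6]
    have hfac := pf_split_t t a w ht0 hwa
    have hsum1 : (1 - a*w)/(1 - t⁻¹*a*w) * ∑ i ∈ s, ((∏ c ∈ s.erase i, (i - t*c)/(i - c))
          * ∏ b ∈ u, (i - q*b)/(i - b)) / (1 - t⁻¹*i*w)
        = (∑ i ∈ s, (((i - t*a)/(i - a)) * ((∏ c ∈ s.erase i, (i - t*c)/(i - c))
            * ∏ b ∈ u, (i - q*b)/(i - b))) / (1 - t⁻¹*i*w))
          + (1-t) * (∑ i ∈ s, (((∏ c ∈ s.erase i, (i - t*c)/(i - c))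
            * ∏ b ∈ u, (i - q*b)/(i - b)) * (a/(a - i)))) / (1 - t⁻¹*a*w) := by
      rw [mul_sum, mul_sum, sum_div, ← sum_add_distrib]
      refine sum_congr rfl fun i hi => ?_
      have h2 : a - i ≠ 0 := sub_ne_zero.mpr (hai i hi)
      have := pf2t t a i w ht0 h2 hwa (hws' i hi)
      linear_combination ((∏ c ∈ s.erase i, (i - t*c)/(i - c))
        * ∏ b ∈ u, (i - q*b)/(i - b)) * this
    have hsum2 : (1 - a*w)/(1 - t⁻¹*a*w) * ∑ j ∈ u, ((∏ i ∈ s, (j - t*i)/(j - i))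
          * ∏ c ∈ u.erase j, (j - q*c)/(j - c)) / (1 - t⁻¹*j*w)
        = (∑ j ∈ u, (((j - t*a)/(j - a)) * ((∏ i ∈ s, (j - t*i)/(j - i))
            * ∏ c ∈ u.erase j, (j - q*c)/(j - c))) / (1 - t⁻¹*j*w))
          + (1-t) * (∑ j ∈ u, (((∏ i ∈ s, (j - t*i)/(j - i))
            * ∏ c ∈ u.erase j, (j - q*c)/(j - c)) * (a/(a - j)))) / (1 - t⁻¹*a*w) := by
      rw [mul_sum, mul_sum, sum_div, ← sum_add_distrib]
      refine sum_congr rfl fun j hj => ?_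
      have h2 : a - j ≠ 0 := sub_ne_zero.mpr (haj j hj)
      have := pf2t t a j w ht0 h2 hwa (hwu j hj)
      linear_combination ((∏ i ∈ s, (j - t*i)/(j - i))
        * ∏ c ∈ u.erase j, (j - q*c)/(j - c)) * this
    linear_combination (t ^ s.card * q ^ u.card) * hfac + (1-t) * hsum1 + (1-q) * hsum2
      - ((1-t)/(1 - t⁻¹*a*w)) * resA

theorem stmt7 (q t : ℂ) (hq : q ≠ 0) (ht0 : t ≠ 0) (ht1 : t ≠ 1)
    (n m : ℕ) (x : Fin n → ℂ) (y : Fin m → ℂ) (w : ℂ)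
    (hx : Function.Injective x) (hy : Function.Injective y)
    (hxy : ∀ i j, x i ≠ y j)
    (hwx : ∀ i, 1 - t⁻¹ * x i * w ≠ 0) (hwy : ∀ j, 1 - t⁻¹ * y j * w ≠ 0) :
    (∏ i, (1 - x i * w) / (1 - t⁻¹ * x i * w)) *
      (∏ j, (1 - t⁻¹ * q * y j * w) / (1 - t⁻¹ * y j * w)) - 1 =
    t ^ n * q ^ m - 1 +
      (1 - t) * ∑ i,
        ((∏ k ∈ Finset.univ.erase i, (x i - t * x k) / (x i - x k)) *
          ∏ j, (x i - q * y j) / (x i - y j)) / (1 - t⁻¹ * x i * w) +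
      (1 - q) * ∑ j,
        ((∏ i, (y j - t * x i) / (y j - x i)) *
          ∏ l ∈ Finset.univ.erase j, (y j - q * y l) / (y j - y l)) /
            (1 - t⁻¹ * y j * w) := by
  classical
  set s : Finset ℂ := Finset.univ.image x with hs
  set u : Finset ℂ := Finset.univ.image y with hu
  have hdisj : ∀ a ∈ s, a ∉ u := by
    intro a has hau
    rw [hs, mem_image] at has
    rw [hu, mem_image] at hau
    obtain ⟨i, _, hi⟩ := has
    obtain ⟨j, _, hj⟩ := hau
    exact hxy i j (hi.trans hj.symm)
  have hinjx : ∀ i ∈ (Finset.univ : Finset (Fin n)), ∀ k ∈ (Finset.univ : Finset (Fin n)),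
      x i = x k → i = k := fun i _ k _ h => hx h
  have hinjy : ∀ i ∈ (Finset.univ : Finset (Fin m)), ∀ k ∈ (Finset.univ : Finset (Fin m)),
      y i = y k → i = k := fun i _ k _ h => hy h
  have hws : ∀ a ∈ s, 1 - t⁻¹*a*w ≠ 0 := by
    intro a has
    rw [hs, mem_image] at has
    obtain ⟨i, _, hi⟩ := has
    exact hi ▸ hwx i
  have hwu : ∀ b ∈ u, 1 - t⁻¹*b*w ≠ 0 := by
    intro b hbu
    rw [hu, mem_image] at hbu
    obtain ⟨j, _, hj⟩ := hbu
    exact hj ▸ hwy j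
  have key := keyXY q t ht0 u s hdisj w hws hwu
  have hcards : s.card = n := by
    rw [hs, Finset.card_image_of_injective _ hx, card_univ, Fintype.card_fin]
  have hcardu : u.card = m := by
    rw [hu, Finset.card_image_of_injective _ hy, card_univ, Fintype.card_fin]
  rw [hcards, hcardu] at key
  rw [prod_image hinjx, prod_image hinjy] at key
  rw [sum_image hinjx, sum_image hinjy] at key
  have ex : ∀ i : Fin n, ∏ c ∈ s.erase (x i), (x i - t*c)/(x i - c)
      = ∏ k ∈ Finset.univ.erase i, (x i - t * x k)/(x i - x k) := by
    intro i
    rw [hs, ← Finset.image_erase hx, prod_image (fun a _ b _ h => hx h)]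
  have ey : ∀ j : Fin m, ∏ c ∈ u.erase (y j), (y j - q*c)/(y j - c)
      = ∏ l ∈ Finset.univ.erase j, (y j - q * y l)/(y j - y l) := by
    intro j
    rw [hu, ← Finset.image_erase hy, prod_image (fun a _ b _ h => hy h)]
  simp only [ex, ey, prod_image hinjx, prod_image hinjy] at key
  rw [hs, hu] at key
  simp only [prod_image hinjx, prod_image hinjy] at key
  linear_combination key
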